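/- arXiv:1905.03595 — 2 statements merged into one kernel-verified Lean document; each statement's English description precedes it below -/
import Mathlib

section
/- Let R be a ring, let A be a nonnegative chain complex of flat right R-modules, and let S be a left R-module regarded as a chain complex concentrated in degree 0. If H₀(A) = 0, then H₁(A ⊗_R S) ≅ H₁(A) ⊗_R S. -/
open LinearMap Function TensorProduct

lemma pure_of_flat_quotient_aux {R K M P S : Type} [CommRing R]
    [AddCommGroup K] [Module R K] [AddCommGroup M] [Module R M]
    [AddCommGroup P] [Module R P] [AddCommGroup S] [Module R S]
    [Module.Flat R P] (ι : K →ₗ[R] M) (π : M →ₗ[R] P)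
    (hι : Function.Injective ι) (hexact : Function.Exact ι π)
    (hπ : Function.Surjective π)
    (F : Type) [AddCommGroup F] [Module R F] [Module.Flat R F]
    (q : F →ₗ[R] S) (hq : Function.Surjective q) :
    Function.Injective (ι.rTensor S) := by
  rw [injective_iff_map_eq_zero]
  intro x hx
  set T := LinearMap.ker q
  set j : T →ₗ[R] F := T.subtype with hj
  have hexactq : Function.Exact j q := q.exact_subtype_ker_map
  obtain ⟨x', hx'⟩ := LinearMap.lTensor_surjective K hq x
  have h2 : q.lTensor M (ι.rTensor F x') = 0 := by
    have c : q.lTensor M (ι.rTensor F x') = ι.rTensor S (q.lTensor K x') := by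
      rw [← LinearMap.comp_apply, ← LinearMap.comp_apply,
        LinearMap.lTensor_comp_rTensor, LinearMap.rTensor_comp_lTensor]
    rw [c, hx', hx]
  obtain ⟨z, hz⟩ := (_root_.lTensor_exact M hexactq hq (ι.rTensor F x')).mp h2
  have h3 : j.lTensor P (π.rTensor T z) = 0 := by
    have c1 : j.lTensor P (π.rTensor T z) = π.rTensor F (j.lTensor M z) := by
      rw [← LinearMap.comp_apply, ← LinearMap.comp_apply,
        LinearMap.lTensor_comp_rTensor, LinearMap.rTensor_comp_lTensor]
    have c2 : π.rTensor F (ι.rTensor F x') = 0 := by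
      rw [← LinearMap.comp_apply, ← LinearMap.rTensor_comp,
        hexact.linearMap_comp_eq_zero, LinearMap.rTensor_zero, LinearMap.zero_apply]
    rw [c1, hz, c2]
  have hjinj : Function.Injective (j.lTensor P) :=
    Module.Flat.lTensor_preserves_injective_linearMap j T.injective_subtype
  have h4 : π.rTensor T z = 0 := by
    apply hjinj; rw [h3, map_zero]
  obtain ⟨w, hw⟩ := (_root_.rTensor_exact (↥T) hexact hπ z).mp h4
  have h5 : ι.rTensor F (j.lTensor K w) = ι.rTensor F x' := by
    have c : ι.rTensor F (j.lTensor K w) = j.lTensor M (ι.rTensor T w) := by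
      rw [← LinearMap.comp_apply, ← LinearMap.comp_apply,
        LinearMap.lTensor_comp_rTensor, LinearMap.rTensor_comp_lTensor]
    rw [c, hw, hz]
  have hιFinj : Function.Injective (ι.rTensor F) :=
    Module.Flat.rTensor_preserves_injective_linearMap ι hι
  have h6 : j.lTensor K w = x' := hιFinj h5
  have hqj : q ∘ₗ j = 0 := hexactq.linearMap_comp_eq_zero
  calc x = q.lTensor K x' := hx'.symm
    _ = q.lTensor K (j.lTensor K w) := by rw [h6]
    _ = (q ∘ₗ j).lTensor K w := by rw [LinearMap.lTensor_comp, LinearMap.comp_apply]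
    _ = 0 := by rw [hqj, LinearMap.lTensor_zero, LinearMap.zero_apply]

lemma pure_of_flat_quotient {R K M P S : Type} [CommRing R]
    [AddCommGroup K] [Module R K] [AddCommGroup M] [Module R M]
    [AddCommGroup P] [Module R P] [AddCommGroup S] [Module R S]
    [Module.Flat R P] (ι : K →ₗ[R] M) (π : M →ₗ[R] P)
    (hι : Function.Injective ι) (hexact : Function.Exact ι π)
    (hπ : Function.Surjective π) :
    Function.Injective (ι.rTensor S) :=
  pure_of_flat_quotient_aux ι π hι hexact hπ (S →₀ R)
    (Finsupp.linearCombination R _root_.id)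
    (Finsupp.linearCombination_surjective R Function.surjective_id)



/-- Let `R` be a (commutative) ring and let
`A : ⋯ → A₂ --d₂--> A₁ --d₁--> A₀ → 0` be a nonnegative chain complex of flat
`R`-modules (only the degrees `≤ 2` are relevant for `H₁`), and let `S` be an
`R`-module regarded as a complex concentrated in degree 0.  If `H₀(A) = 0`
(i.e. `d₁` is surjective), then `H₁(A ⊗_R S) ≅ H₁(A) ⊗_R S`, where `A ⊗_R S` is the
complex with `(A ⊗ S)ₙ = Aₙ ⊗ S` and boundaries `∂ ⊗ id`.  (This is the degeneration
of the Künneth spectral sequence `E²_{p,q} = Tor_p(H_q(A), S)` when `E²_{1,0} = 0`.) -/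
theorem stmt_4 (R : Type) [CommRing R]
    (A₀ A₁ A₂ S : Type) [AddCommGroup A₀] [AddCommGroup A₁] [AddCommGroup A₂]
    [AddCommGroup S] [Module R A₀] [Module R A₁] [Module R A₂] [Module R S]
    [Module.Flat R A₀] [Module.Flat R A₁] [Module.Flat R A₂]
    (d₁ : A₁ →ₗ[R] A₀) (d₂ : A₂ →ₗ[R] A₁)
    (hcomplex : d₁ ∘ₗ d₂ = 0)
    (hH₀ : LinearMap.range d₁ = ⊤) :
    Nonempty
      ((LinearMap.ker (d₁.rTensor S) ⧸
          Submodule.comap (LinearMap.ker (d₁.rTensor S)).subtype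
            (LinearMap.range (d₂.rTensor S)))
        ≃ₗ[R]
       TensorProduct R
         (LinearMap.ker d₁ ⧸
           Submodule.comap (LinearMap.ker d₁).subtype (LinearMap.range d₂)) S) := by
  set K := LinearMap.ker d₁
  set ι : K →ₗ[R] A₁ := K.subtype with hι
  have hπ : Function.Surjective d₁ := range_eq_top.mp hH₀
  have hexact : Function.Exact ι d₁ := d₁.exact_subtype_ker_map
  -- d₂ factors through K
  have hd₂mem : ∀ x, d₂ x ∈ K := fun x =>
    LinearMap.mem_ker.mpr (by simpa using congr($hcomplex x))
  set d₂' : A₂ →ₗ[R] K := d₂.codRestrict K hd₂mem with hd₂'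
  have hfac : ι ∘ₗ d₂' = d₂ := by ext x; rfl
  -- e : K ⊗ S ≃ ker (d₁.rTensor S)
  have hinj : Function.Injective (ι.rTensor S) :=
    pure_of_flat_quotient ι d₁ K.injective_subtype hexact hπ
  have hrange : LinearMap.range (ι.rTensor S) = LinearMap.ker (d₁.rTensor S) :=
    ((_root_.rTensor_exact S hexact hπ).linearMap_ker_eq).symm
  set e : (K ⊗[R] S) ≃ₗ[R] LinearMap.ker (d₁.rTensor S) :=
    (LinearEquiv.ofInjective _ hinj).trans (LinearEquiv.ofEq _ _ hrange) with he
  have hecoe : ∀ x : K ⊗[R] S, (e x : A₁ ⊗[R] S) = ι.rTensor S x := fun x => rfl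
  -- the two submodules correspond
  have hmap : (LinearMap.range (d₂'.rTensor S)).map (e : (K ⊗[R] S) →ₗ[R] _) =
      Submodule.comap (LinearMap.ker (d₁.rTensor S)).subtype
        (LinearMap.range (d₂.rTensor S)) := by
    apply le_antisymm
    · rintro _ ⟨_, ⟨y, rfl⟩, rfl⟩
      simp only [Submodule.mem_comap, Submodule.coe_subtype, LinearEquiv.coe_coe]
      rw [hecoe]
      refine ⟨y, ?_⟩
      rw [← hfac, LinearMap.rTensor_comp, LinearMap.comp_apply]
    · rintro x hx
      obtain ⟨y, hy⟩ := hx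
      refine ⟨d₂'.rTensor S y, ⟨y, rfl⟩, ?_⟩
      apply Subtype.ext
      simp only [LinearEquiv.coe_coe]
      rw [hecoe, ← LinearMap.comp_apply, ← LinearMap.rTensor_comp, hfac]
      exact hy
  set N₁ := Submodule.comap K.subtype (LinearMap.range d₂) with hN₁
  have eq1 : N₁ = LinearMap.range d₂' := by
    ext x
    simp only [hN₁, Submodule.mem_comap, LinearMap.mem_range, Submodule.coe_subtype]
    constructor
    · rintro ⟨y, hy⟩; exact ⟨y, Subtype.ext hy⟩
    · rintro ⟨y, rfl⟩; exact ⟨y, rfl⟩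
  have heq : LinearMap.range (TensorProduct.map N₁.subtype (LinearMap.id : S →ₗ[R] S)) =
      LinearMap.range (d₂'.rTensor S) := by
    rw [eq1]
    have h1 : (LinearMap.range
        (TensorProduct.map (LinearMap.range d₂').subtype (LinearMap.id : S →ₗ[R] S))) =
        LinearMap.range ((LinearMap.range d₂').subtype.rTensor S) := rfl
    rw [h1]
    have h2 : d₂'.rTensor S =
        ((LinearMap.range d₂').subtype.rTensor S) ∘ₗ (d₂'.rangeRestrict.rTensor S) := by
      rw [← LinearMap.rTensor_comp, LinearMap.subtype_comp_codRestrict _ _ _]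
    rw [h2, LinearMap.range_comp_of_range_eq_top]
    rw [LinearMap.range_eq_top]
    exact LinearMap.rTensor_surjective S d₂'.surjective_rangeRestrict
  set q1 := Submodule.Quotient.equiv (LinearMap.range (d₂'.rTensor S))
    (Submodule.comap (LinearMap.ker (d₁.rTensor S)).subtype
      (LinearMap.range (d₂.rTensor S))) e hmap
  set q2 := TensorProduct.quotientTensorEquiv S N₁
  exact ⟨q1.symm.trans ((q2.trans (Submodule.quotEquivOfEq _ _ heq)).symm)⟩
end

section
/- Let (X, Y) be a finite CW-pair and φ : π₁(X) → H a homomorphism to a free abelian group H, inducing coefficients in Q(H), the quotient field of Z[H]. If H_*(X, Y; Z) = 0 (ordinary relative integral homology vanishes in all degrees), then H_*(X, Y; Q(H)) = 0. -/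
open Matrix Submodule Module

section RankAux
variable {K : Type*} [Field K]

lemma aux_rank_submatrix_le {m n p q : ℕ} (A : Matrix (Fin m) (Fin n) K)
    (s : Fin p → Fin m) (t : Fin q → Fin n) :
    (A.submatrix s t).rank ≤ A.rank := by
  have h1 : A.submatrix s t =
      ((1 : Matrix (Fin m) (Fin m) K).submatrix s id) *
        (A * ((1 : Matrix (Fin n) (Fin n) K).submatrix id t)) := by
    ext i j
    simp [Matrix.mul_apply, Matrix.one_apply, Finset.sum_ite_eq, Finset.sum_ite_eq']
  rw [h1]
  exact le_trans (Matrix.rank_mul_le_right _ _)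
    (Matrix.rank_mul_le_left _ _)

lemma aux_exists_li_rows {m n ρ : ℕ} (A : Matrix (Fin m) (Fin n) K) (h : A.rank = ρ) :
    ∃ s : Fin ρ → Fin m, LinearIndependent K (A ∘ s) := by
  obtain ⟨b, hb_sub, hb_span, hb_li⟩ := exists_linearIndependent K (Set.range A)
  have hfin : b.Finite := hb_li.setFinite
  haveI : Fintype b := hfin.fintype
  have hcard : Fintype.card b = ρ := by
    have h1 : finrank K (span K b) = b.toFinset.card := finrank_span_set_eq_card hb_li
    rw [hb_span] at h1
    change finrank K (span K (Set.range A.row)) = _ at h1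
    rw [← Matrix.rank_eq_finrank_span_row] at h1
    rw [← Set.toFinset_card, ← h1, h]
  let e : Fin ρ ≃ b := (Fintype.equivFinOfCardEq hcard).symm
  have hchoice : ∀ x : b, ∃ i, A i = (x : Fin n → K) := fun x => hb_sub x.2
  refine ⟨fun i => (hchoice (e i)).choose, ?_⟩
  have hA : A ∘ (fun i => (hchoice (e i)).choose) = (Subtype.val ∘ e) := by
    funext i
    exact (hchoice (e i)).choose_spec
  rw [hA]
  exact hb_li.comp e e.injective

lemma aux_exists_submatrix_det_ne_zero {m n : ℕ} (A : Matrix (Fin m) (Fin n) K) :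
    ∃ (s : Fin A.rank → Fin m) (t : Fin A.rank → Fin n),
      (A.submatrix s t).det ≠ 0 := by
  obtain ⟨s, hs⟩ := aux_exists_li_rows A rfl
  have hB : (A.submatrix s id).rank = A.rank := by
    have : LinearIndependent K (A.submatrix s id) := hs
    exact (by simpa using this.rank_matrix : (Matrix.of fun i j => A (s i) j).rank = A.rank)
  have hBT : (A.submatrix s id)ᵀ.rank = A.rank := by
    rw [Matrix.rank_transpose]; exact hB
  obtain ⟨t, ht⟩ := aux_exists_li_rows (A.submatrix s id)ᵀ hBT
  refine ⟨s, t, ?_⟩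
  have heq : (A.submatrix s t)ᵀ = ((A.submatrix s id)ᵀ).submatrix t id := by
    ext j i; rfl
  have hli : LinearIndependent K ((A.submatrix s t)ᵀ) := by
    rw [heq]; exact ht
  have hunit : IsUnit ((A.submatrix s t)ᵀ) :=
    Matrix.linearIndependent_rows_iff_isUnit.mp hli
  have : (A.submatrix s t)ᵀ.det ≠ 0 :=
    (Matrix.isUnit_iff_isUnit_det _ |>.mp hunit).ne_zero
  rw [← Matrix.det_transpose]; exact this

lemma aux_rank_map_le {R : Type*} [CommRing R] {K F : Type*} [Field K] [Field F]
    {m n : ℕ} (A : Matrix (Fin m) (Fin n) R) (e : R →+* K) (j : R →+* F)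
    (hj : Function.Injective j) : (A.map e).rank ≤ (A.map j).rank := by
  obtain ⟨s, t, hdet⟩ := aux_exists_submatrix_det_ne_zero (A.map e)
  have h2 : (A.submatrix s t).det ≠ 0 := by
    intro h
    apply hdet
    rw [Matrix.submatrix_map, ← RingHom.mapMatrix_apply, ← RingHom.map_det, h, map_zero]
  have h3 : ((A.map j).submatrix s t).det ≠ 0 := by
    rw [Matrix.submatrix_map, ← RingHom.mapMatrix_apply, ← RingHom.map_det]
    intro h
    exact h2 (hj (by rw [h, map_zero]))
  have h4 : ((A.map j).submatrix s t).rank = (A.map e).rank := by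
    rw [Matrix.rank_of_isUnit _ ((Matrix.isUnit_iff_isUnit_det _).mpr h3.isUnit)]
    simp
  calc (A.map e).rank = ((A.map j).submatrix s t).rank := h4.symm
    _ ≤ (A.map j).rank := aux_rank_submatrix_le _ _ _

lemma aux_finrank_range_vecMulLinear {m n : ℕ} (A : Matrix (Fin m) (Fin n) K) :
    finrank K (LinearMap.range A.vecMulLinear) = A.rank := by
  rw [← Matrix.mulVecLin_transpose]
  exact Matrix.rank_transpose A

end RankAux

open Matrix Submodule Module

section RatAux

local notation "c" => Int.castRingHom ℚ

lemma aux_cast_vecMul {m n : ℕ} (A : Matrix (Fin m) (Fin n) ℤ) (v : Fin m → ℤ) :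
    ((Int.cast : ℤ → ℚ) ∘ v) ᵥ* (A.map (Int.cast : ℤ → ℚ)) =
      (Int.cast : ℤ → ℚ) ∘ (v ᵥ* A) := by
  funext i
  exact (RingHom.map_vecMul c A v i).symm

lemma aux_surj_rat {m n : ℕ} (A : Matrix (Fin m) (Fin n) ℤ)
    (h : LinearMap.range A.vecMulLinear = ⊤) :
    LinearMap.range (A.map (Int.cast : ℤ → ℚ)).vecMulLinear = ⊤ := by
  rw [Submodule.eq_top_iff']
  intro w
  have hsingle : ∀ j : Fin n, (Pi.single j (1 : ℚ) : Fin n → ℚ) ∈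
      LinearMap.range (A.map (Int.cast : ℤ → ℚ)).vecMulLinear := by
    intro j
    have : Pi.single j (1 : ℤ) ∈ LinearMap.range A.vecMulLinear := by rw [h]; trivial
    obtain ⟨u, hu⟩ := this
    refine ⟨(Int.cast : ℤ → ℚ) ∘ u, ?_⟩
    rw [Matrix.vecMulLinear_apply, aux_cast_vecMul]
    rw [Matrix.vecMulLinear_apply] at hu
    rw [hu]
    funext i
    simp [Pi.single_apply]
  have : w = ∑ j : Fin n, w j • (Pi.single j (1 : ℚ) : Fin n → ℚ) := by
    funext i
    simp [Finset.sum_apply, Pi.single_apply, Finset.sum_ite_eq, Finset.sum_ite_eq']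
  rw [this]
  exact Submodule.sum_mem _ fun j _ => Submodule.smul_mem _ _ (hsingle j)

lemma aux_ker_rat {m n p : ℕ} (A : Matrix (Fin m) (Fin n) ℤ)
    (B : Matrix (Fin p) (Fin m) ℤ)
    (h : LinearMap.ker A.vecMulLinear = LinearMap.range B.vecMulLinear) :
    LinearMap.ker (A.map (Int.cast : ℤ → ℚ)).vecMulLinear =
      LinearMap.range (B.map (Int.cast : ℤ → ℚ)).vecMulLinear := by
  have hBA : B * A = 0 := by
    ext j i
    have hrow : (Pi.single j (1 : ℤ) : Fin p → ℤ) ᵥ* B = B j := by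
      funext x
      simp [Matrix.vecMul, dotProduct, Pi.single_apply]
    have hmem : B j ∈ LinearMap.range B.vecMulLinear :=
      ⟨Pi.single j 1, by rw [Matrix.vecMulLinear_apply, hrow]⟩
    rw [← h, LinearMap.mem_ker] at hmem
    have h2 := congrFun hmem i
    rw [Matrix.vecMulLinear_apply] at h2
    simp only [Matrix.vecMul, dotProduct, Pi.zero_apply] at h2
    simpa [Matrix.mul_apply] using h2
  apply le_antisymm
  · intro w hw
    rw [LinearMap.mem_ker, Matrix.vecMulLinear_apply] at hw
    obtain ⟨b, hb⟩ := IsLocalization.exist_integer_multiples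
      (nonZeroDivisors ℤ) Finset.univ w
    choose v hv using fun i => hb i (Finset.mem_univ i)
    have hbz : ((b : ℤ) : ℚ) ≠ 0 := by
      simpa using nonZeroDivisors.coe_ne_zero b
    have hwv : (Int.cast : ℤ → ℚ) ∘ v = (b : ℤ) • w := by
      funext i
      have := hv i
      simpa [Algebra.smul_def] using this
    have hvA : v ᵥ* A = 0 := by
      have h1 : (Int.cast : ℤ → ℚ) ∘ (v ᵥ* A) = 0 := by
        rw [← aux_cast_vecMul, hwv]
        have : ((b : ℤ) • w) ᵥ* (A.map (Int.cast : ℤ → ℚ)) =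
            (b : ℤ) • (w ᵥ* (A.map (Int.cast : ℤ → ℚ))) := by
          rw [← Matrix.vecMulLinear_apply, ← Matrix.vecMulLinear_apply]
          exact map_zsmul ((A.map (Int.cast : ℤ → ℚ)).vecMulLinear) _ _
        rw [this, hw, smul_zero]
      funext i
      have := congrFun h1 i
      simpa using this
    have hvker : v ∈ LinearMap.ker A.vecMulLinear := by
      rw [LinearMap.mem_ker, Matrix.vecMulLinear_apply]; exact hvA
    rw [h] at hvker
    obtain ⟨u, hu⟩ := hvker
    refine ⟨((b : ℤ) : ℚ)⁻¹ • ((Int.cast : ℤ → ℚ) ∘ u), ?_⟩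
    rw [LinearMap.map_smul, Matrix.vecMulLinear_apply, aux_cast_vecMul]
    rw [Matrix.vecMulLinear_apply] at hu
    rw [hu, hwv]
    rw [inv_smul_eq_iff₀ hbz]
    ext i; simp [zsmul_eq_mul]
  · rintro x ⟨u, rfl⟩
    rw [LinearMap.mem_ker, Matrix.vecMulLinear_apply, Matrix.vecMulLinear_apply,
      Matrix.vecMul_vecMul]
    have hmul : (B.map (Int.cast : ℤ → ℚ)) * (A.map (Int.cast : ℤ → ℚ))
        = (B * A).map (Int.cast : ℤ → ℚ) := by
      have h3 := Matrix.map_mul (L := B) (M := A) (f := c)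
      simpa using h3.symm
    rw [hmul, hBA]
    simp

end RatAux


set_option maxHeartbeats 1600000


/-- criterion of Cochran–Orr–Teichner used in the paper: Let `(X, Y)`
be a finite CW-pair whose relative cellular chain complex over `ℤ[π₁(X)]` is the
bounded complex of finitely generated free modules determined by the boundary
matrices `D i` (so `∂_{i+1} : C_{i+1} → C_i` is right multiplication by `D i`), and
let `φ : π₁(X) → H` be a homomorphism to a free abelian group `H ≅ ℤᵏ`, inducing
coefficients in `Q(H) = Frac(ℤ[H])`.  If the ordinary relative integral homology
vanishes in all degrees (homology of the complex pushed forward along the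
augmentation `ε : ℤ[π₁X] → ℤ`), then the homology with `Q(H)`-coefficients (the
complex pushed forward along `ℤ[π₁X] → ℤ[H] → Q(H)`) vanishes in all degrees. -/
theorem stmt_15 (π : Type) [Group π] (k : ℕ)
    (φ : π →* Multiplicative (Fin k → ℤ))
    (r : ℕ → ℕ) (N : ℕ) (hbound : ∀ i, N < i → r i = 0)
    (D : ∀ i : ℕ, Matrix (Fin (r (i + 1))) (Fin (r i)) (MonoidAlgebra ℤ π))
    (hcomplex : ∀ i, D (i + 1) * D i = 0)
    (ε : MonoidAlgebra ℤ π →+* ℤ)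
    (hε : ε = ((MonoidAlgebra.lift ℤ ℤ π) 1).toRingHom)
    (ψ : MonoidAlgebra ℤ π →+*
      FractionRing (MonoidAlgebra ℤ (Multiplicative (Fin k → ℤ))))
    (hψ : ψ = (algebraMap (MonoidAlgebra ℤ (Multiplicative (Fin k → ℤ)))
        (FractionRing (MonoidAlgebra ℤ (Multiplicative (Fin k → ℤ))))).comp
        (MonoidAlgebra.mapDomainRingHom ℤ φ))
    (hH0 : LinearMap.range ((D 0).map ε).vecMulLinear = ⊤)
    (hHi : ∀ i, LinearMap.ker ((D i).map ε).vecMulLinear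
      = LinearMap.range ((D (i + 1)).map ε).vecMulLinear) :
    LinearMap.range ((D 0).map ψ).vecMulLinear = ⊤ ∧
    ∀ i, LinearMap.ker ((D i).map ψ).vecMulLinear
      = LinearMap.range ((D (i + 1)).map ψ).vecMulLinear := by
  classical
  set R := MonoidAlgebra ℤ (Multiplicative (Fin k → ℤ)) with hR
  letI : IsDomain R := NoZeroDivisors.to_isDomain _
  set F := FractionRing R with hFdef
  set f : MonoidAlgebra ℤ π →+* R := MonoidAlgebra.mapDomainRingHom ℤ φ with hfdef
  set ι : R →+* F := algebraMap R F with hιdef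
  have hι : Function.Injective ι := IsFractionRing.injective R F
  set augR : R →+* ℤ :=
    ((MonoidAlgebra.lift ℤ ℤ (Multiplicative (Fin k → ℤ))) 1).toRingHom with haugdef
  have hmds : ∀ (a : π) (b : ℤ), (MonoidAlgebra.mapDomainRingHom ℤ φ)
      (MonoidAlgebra.single a b) = MonoidAlgebra.single (φ a) b := by
    intro a b
    simp [MonoidAlgebra.mapDomainRingHom_apply, Finsupp.mapDomain_single]
  have hfac : augR.comp f = ε := by
    rw [hε]
    apply MonoidAlgebra.ringHom_ext
    · intro b
      show ((MonoidAlgebra.lift ℤ ℤ (Multiplicative (Fin k → ℤ))) 1)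
        ((MonoidAlgebra.mapDomainRingHom ℤ φ) (MonoidAlgebra.single 1 b)) = _
      rw [hmds, MonoidAlgebra.lift_single]
      have h9 : (((MonoidAlgebra.lift ℤ ℤ π) 1).toRingHom) (MonoidAlgebra.single 1 b)
          = ((MonoidAlgebra.lift ℤ ℤ π) 1) (MonoidAlgebra.single 1 b) := rfl
      rw [h9, MonoidAlgebra.lift_single]
      simp
    · intro a
      show ((MonoidAlgebra.lift ℤ ℤ (Multiplicative (Fin k → ℤ))) 1)
        ((MonoidAlgebra.mapDomainRingHom ℤ φ) (MonoidAlgebra.single a 1)) = _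
      rw [hmds, MonoidAlgebra.lift_single]
      have h9 : (((MonoidAlgebra.lift ℤ ℤ π) 1).toRingHom) (MonoidAlgebra.single a 1)
          = ((MonoidAlgebra.lift ℤ ℤ π) 1) (MonoidAlgebra.single a 1) := rfl
      rw [h9, MonoidAlgebra.lift_single]
      simp
  set e2 : R →+* ℚ := (Int.castRingHom ℚ).comp augR with he2def
  have hψeq : ∀ i, (D i).map ⇑ψ = ((D i).map ⇑f).map ⇑ι := by
    intro i
    rw [hψ, RingHom.coe_comp, ← Matrix.map_map]
  have hεeq : ∀ i, (D i).map ⇑ε = ((D i).map ⇑f).map ⇑augR := by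
    intro i
    rw [← hfac, RingHom.coe_comp, ← Matrix.map_map]
  have hEeq : ∀ i, ((D i).map ⇑ε).map (Int.cast : ℤ → ℚ)
      = ((D i).map ⇑f).map ⇑e2 := by
    intro i
    rw [hεeq i, Matrix.map_map, he2def, RingHom.coe_comp]
    rfl
  set σ : ℕ → ℕ := fun i => ((D i).map ⇑ψ).rank with hσdef
  set ρ : ℕ → ℕ := fun i => (((D i).map ⇑ε).map (Int.cast : ℤ → ℚ)).rank with hρdef
  have hρ0 : ρ 0 = r 0 := by
    have h1 := aux_surj_rat _ hH0
    have h2 := aux_finrank_range_vecMulLinear (((D 0).map ⇑ε).map (Int.cast : ℤ → ℚ))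
    rw [h1] at h2
    rw [hρdef]
    simpa [Module.finrank_pi] using h2.symm
  have hρsum : ∀ i, ρ i + ρ (i + 1) = r (i + 1) := by
    intro i
    have hk := aux_ker_rat _ _ (hHi i)
    have h1 := LinearMap.finrank_range_add_finrank_ker
      ((((D i).map ⇑ε).map (Int.cast : ℤ → ℚ)).vecMulLinear)
    rw [hk, aux_finrank_range_vecMulLinear, aux_finrank_range_vecMulLinear] at h1
    rw [hρdef]
    simpa [Module.finrank_pi] using h1
  have hle : ∀ i, ρ i ≤ σ i := by
    intro i
    rw [hρdef, hσdef]
    simp only [hEeq i, hψeq i]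
    exact aux_rank_map_le ((D i).map ⇑f) e2 ι hι
  have hcF : ∀ i, (D (i + 1)).map ⇑ψ * (D i).map ⇑ψ = 0 := by
    intro i
    rw [← Matrix.map_mul (f := ψ), hcomplex i]
    ext x y
    simp [Matrix.map_apply]
  have hσsum : ∀ i, σ (i + 1) + σ i ≤ r (i + 1) := by
    intro i
    simpa using Matrix.rank_add_rank_le_card_of_mul_eq_zero (hcF i)
  have hσρ : ∀ i, σ i = ρ i := by
    intro i
    induction i with
    | zero =>
      have h1 : σ 0 ≤ r 0 := Matrix.rank_le_width _
      have h2 := hle 0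
      omega
    | succ n ih =>
      have h1 := hσsum n
      have h2 := hρsum n
      have h3 := hle (n + 1)
      omega
  constructor
  · apply Submodule.eq_top_of_finrank_eq
    rw [aux_finrank_range_vecMulLinear]
    have : σ 0 = r 0 := by rw [hσρ 0]; omega
    rw [hσdef] at this
    simp only at this
    rw [this]
    simp [Module.finrank_pi]
  · intro i
    have hle' : LinearMap.range ((D (i + 1)).map ⇑ψ).vecMulLinear ≤
        LinearMap.ker ((D i).map ⇑ψ).vecMulLinear := by
      rintro x ⟨u, rfl⟩
      rw [LinearMap.mem_ker, Matrix.vecMulLinear_apply, Matrix.vecMulLinear_apply,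
        Matrix.vecMul_vecMul, hcF i]
      simp
    have h1 : Module.finrank F (LinearMap.range ((D i).map ⇑ψ).vecMulLinear)
        + Module.finrank F (LinearMap.ker ((D i).map ⇑ψ).vecMulLinear)
        = Module.finrank F (Fin (r (i + 1)) → F) :=
      LinearMap.finrank_range_add_finrank_ker (((D i).map ⇑ψ).vecMulLinear)
    rw [aux_finrank_range_vecMulLinear] at h1
    have hpi : Module.finrank F (Fin (r (i + 1)) → F) = r (i + 1) := by
      simp [Module.finrank_pi]
    rw [hpi] at h1
    have h2 : Module.finrank F
        (LinearMap.range ((D (i + 1)).map ⇑ψ).vecMulLinear) = σ (i + 1) :=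
      aux_finrank_range_vecMulLinear _
    have h3 : Module.finrank F (LinearMap.ker ((D i).map ⇑ψ).vecMulLinear) ≤
        Module.finrank F (LinearMap.range ((D (i + 1)).map ⇑ψ).vecMulLinear) := by
      rw [h2]
      have h4 := hρsum i
      have h5 := hσρ i
      have h6 := hσρ (i + 1)
      have h7 := hle i
      have h0 : ((D i).map ⇑ψ).rank = σ i := rfl
      rw [h0] at h1
      omega
    exact (Submodule.eq_of_le_of_finrank_le hle' h3).symm
end
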